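/- For two basic permutations v(k,p,q) and v(k',p',q') in S_n, we have v(k',p',q') ≥ v(k,p,q) in Bruhat order if and only if r_{v(k',p',q')}(p,q) ≥ k, where r_v(p,q) = #{i ≤ p : v(i) > q}. -/

import Mathlib

/-- A permutation of `ℤ` is a signed permutation if it is odd: `w(-i) = -w(i)`. -/
def IsSigned (w : Equiv.Perm ℤ) : Prop := ∀ i : ℤ, w (-i) = -(w i)

/-- `w` fixes every integer `m` with `|m| > N` (i.e. `w` lies in `W_N`, resp. `S` supported there). -/
def FixesBeyond (N : ℤ) (w : Equiv.Perm ℤ) : Prop := ∀ m : ℤ, N < |m| → w m = m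

/-- Word length of `g` with respect to a generating set `S`. -/
noncomputable def wlen (S : Set (Equiv.Perm ℤ)) (g : Equiv.Perm ℤ) : ℕ :=
  sInf {m | ∃ l : List (Equiv.Perm ℤ), l.length = m ∧ (∀ x ∈ l, x ∈ S) ∧ l.prod = g}

/-- Bruhat order for the group generated by `S`: the reflexive-transitive closure of
multiplying on the right by a reflection (a conjugate, by an element of the generated
subgroup, of a generator) while increasing the word length. -/
def bruhatLe (S : Set (Equiv.Perm ℤ)) (u v : Equiv.Perm ℤ) : Prop :=
  Relation.ReflTransGen
    (fun x y => (∃ g ∈ Subgroup.closure S, ∃ s ∈ S, y = x * (g * s * g⁻¹)) ∧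
      wlen S x < wlen S y) u v

/-- The simple generators of the type B Weyl group `W_n`, as permutations of `ℤ`. -/
def BGens (n : ℤ) : Set (Equiv.Perm ℤ) :=
  {Equiv.swap 1 (-1)} ∪
    {x | ∃ i : ℤ, 1 ≤ i ∧ i < n ∧ x = Equiv.swap i (i + 1) * Equiv.swap (-i) (-(i + 1))}

/-- The simple generators of the infinite signed permutation group `W_∞`. -/
def BGensInf : Set (Equiv.Perm ℤ) :=
  {Equiv.swap 1 (-1)} ∪
    {x | ∃ i : ℤ, 1 ≤ i ∧ x = Equiv.swap i (i + 1) * Equiv.swap (-i) (-(i + 1))}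

/-- Adjacent transpositions `(i, i+1)` for `a ≤ i < b`: simple generators of the symmetric
group on `{a, ..., b}`. -/
def AGens (a b : ℤ) : Set (Equiv.Perm ℤ) :=
  {x | ∃ i : ℤ, a ≤ i ∧ i < b ∧ x = Equiv.swap i (i + 1)}

/-- The length of a signed permutation in `W_n`, by the inversion-count formula. -/
noncomputable def lenCount (n : ℤ) (w : Equiv.Perm ℤ) : ℕ :=
  {x : ℤ × ℤ | 0 < x.1 ∧ x.1 < x.2 ∧ x.2 ≤ n ∧ w x.2 < w x.1}.ncard +
  {x : ℤ × ℤ | 0 < x.1 ∧ x.1 ≤ x.2 ∧ x.2 ≤ n ∧ w x.1 + w x.2 < 0}.ncard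

/-- The length of a signed permutation in `W_∞`, by the inversion-count formula. -/
noncomputable def lenCountInf (w : Equiv.Perm ℤ) : ℕ :=
  {x : ℤ × ℤ | 0 < x.1 ∧ x.1 < x.2 ∧ w x.2 < w x.1}.ncard +
  {x : ℤ × ℤ | 0 < x.1 ∧ x.1 ≤ x.2 ∧ w x.1 + w x.2 < 0}.ncard

/-- Type B rank function `r_w(p,q) = #{i ≥ p : w(i) ≤ -q}`. -/
noncomputable def rB (p q : ℤ) (w : Equiv.Perm ℤ) : ℤ :=
  ({i : ℤ | p ≤ i ∧ w i ≤ -q}.ncard : ℤ)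

/-- Type B rank function with the bound `i ≤ n`: `r_w(p,q) = #{p ≤ i ≤ n : w(i) ≤ -q}`. -/
noncomputable def rBn (n p q : ℤ) (w : Equiv.Perm ℤ) : ℤ :=
  ({i : ℤ | p ≤ i ∧ i ≤ n ∧ w i ≤ -q}.ncard : ℤ)

/-- Type A rank function `r_v(p,q) = #{1 ≤ i ≤ p : v(i) > q}`. -/
noncomputable def rA (p q : ℤ) (v : Equiv.Perm ℤ) : ℤ :=
  ({i : ℤ | 1 ≤ i ∧ i ≤ p ∧ q < v i}.ncard : ℤ)

/-- Rank function `r_v(p,q) = #{i ≤ -p : v(i) ≥ q}` (for permutations of `{-n,...,n}`). -/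
noncomputable def rAneg (p q : ℤ) (v : Equiv.Perm ℤ) : ℤ :=
  ({i : ℤ | i ≤ -p ∧ q ≤ v i}.ncard : ℤ)

/-- A type B basic triple. -/
def BasicB (k p q : ℤ) : Prop :=
  0 < k ∧ 1 - p - q < k ∧ 0 < p ∧ q ≠ 0 ∧ (p = 1 → 0 < q)

/-- The basic (bigrassmannian) permutation `v(k,p,q)` of type A, with one-line notation
`1, ..., p-k, q+1, ..., q+k, p-k+1, ..., q`, as a function on `ℤ`. -/
def vAfun (k p q i : ℤ) : ℤ :=
  if i ≤ p - k then i else if i ≤ p then q + (i - (p - k))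
  else if i ≤ q + k then i - k else i

/-- `w0` is the minimum, in Bruhat order on `W_∞`, among signed permutations `w`
with `r_w(p,q) ≥ k`: i.e. the basic signed permutation `w(k,p,q)`. -/
def IsMinB (k p q : ℤ) (w0 : Equiv.Perm ℤ) : Prop :=
  IsSigned w0 ∧ (∃ N : ℤ, FixesBeyond N w0) ∧ k ≤ rB p q w0 ∧
    ∀ w : Equiv.Perm ℤ, IsSigned w → (∃ N : ℤ, FixesBeyond N w) → k ≤ rB p q w →
      bruhatLe BGensInf w0 w

namespace S13
open Equiv Set

noncomputable def cnt (A B Q : ℤ) (w : Equiv.Perm ℤ) : ℤ :=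
  (({a : ℤ | A ≤ a ∧ a ≤ B ∧ Q < w a}.ncard : ℕ) : ℤ)

lemma cntSet_finite (A B Q : ℤ) (w : Equiv.Perm ℤ) :
    {a : ℤ | A ≤ a ∧ a ≤ B ∧ Q < w a}.Finite :=
  (Set.finite_Icc A B).subset fun a ha => Set.mem_Icc.2 ⟨ha.1, ha.2.1⟩

lemma rA_eq_cnt (P Q : ℤ) (w : Equiv.Perm ℤ) : rA P Q w = cnt 1 P Q w := rfl

lemma cnt_nonneg (A B Q : ℤ) (w : Equiv.Perm ℤ) : 0 ≤ cnt A B Q w := Int.ofNat_nonneg _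

lemma cnt_empty (A B Q : ℤ) (w : Equiv.Perm ℤ) (h : B < A) : cnt A B Q w = 0 := by
  unfold cnt
  rw [show {a : ℤ | A ≤ a ∧ a ≤ B ∧ Q < w a} = ∅ by ext a; simp; intros; omega,
    Set.ncard_empty]
  rfl

lemma cnt_split (A M B Q : ℤ) (w : Equiv.Perm ℤ) (h1 : A - 1 ≤ M) (h2 : M ≤ B) :
    cnt A B Q w = cnt A M Q w + cnt (M+1) B Q w := by
  unfold cnt
  rw [← Nat.cast_add, ← Set.ncard_union_eq (s := {a : ℤ | A ≤ a ∧ a ≤ M ∧ Q < w a})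
    (t := {a : ℤ | M+1 ≤ a ∧ a ≤ B ∧ Q < w a})
    (by rw [Set.disjoint_left]; intro a ha hb; simp only [Set.mem_setOf_eq] at ha hb; omega)
    (cntSet_finite _ _ _ _) (cntSet_finite _ _ _ _)]
  congr 2
  ext a
  simp only [Set.mem_setOf_eq, Set.mem_union]
  constructor
  · rintro ⟨h3, h4, h5⟩; rcases le_or_gt a M with h | h
    · exact Or.inl ⟨h3, h, h5⟩
    · exact Or.inr ⟨by omega, h4, h5⟩
  · rintro (⟨h3, h4, h5⟩ | ⟨h3, h4, h5⟩) <;> exact ⟨by omega, by omega, h5⟩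

lemma cnt_single (A Q : ℤ) (w : Equiv.Perm ℤ) :
    cnt A A Q w = if Q < w A then 1 else 0 := by
  unfold cnt
  split_ifs with h
  · rw [show {a : ℤ | A ≤ a ∧ a ≤ A ∧ Q < w a} = {A} by
      ext a; simp only [Set.mem_setOf_eq, Set.mem_singleton_iff]
      constructor
      · rintro ⟨h1, h2, _⟩; omega
      · rintro rfl; exact ⟨le_refl _, le_refl _, h⟩, Set.ncard_singleton]
    rfl
  · rw [show {a : ℤ | A ≤ a ∧ a ≤ A ∧ Q < w a} = ∅ by
      ext a; simp only [Set.mem_setOf_eq, Set.mem_empty_iff_false, iff_false, not_and]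
      intro h1 h2; rw [show a = A by omega]; exact fun hh => h hh, Set.ncard_empty]
    rfl

lemma cnt_congr (A B Q Q' : ℤ) (w w' : Equiv.Perm ℤ)
    (h : ∀ a, A ≤ a → a ≤ B → (Q < w a ↔ Q' < w' a)) :
    cnt A B Q w = cnt A B Q' w' := by
  unfold cnt
  congr 2
  ext a
  simp only [Set.mem_setOf_eq]
  exact ⟨fun ⟨h1, h2, h3⟩ => ⟨h1, h2, (h a h1 h2).1 h3⟩,
    fun ⟨h1, h2, h3⟩ => ⟨h1, h2, (h a h1 h2).2 h3⟩⟩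

lemma cnt_mono (A B Q Q' : ℤ) (w w' : Equiv.Perm ℤ)
    (h : ∀ a, A ≤ a → a ≤ B → Q < w a → Q' < w' a) :
    cnt A B Q w ≤ cnt A B Q' w' := by
  unfold cnt
  have hsub : {a : ℤ | A ≤ a ∧ a ≤ B ∧ Q < w a} ⊆ {a : ℤ | A ≤ a ∧ a ≤ B ∧ Q' < w' a} :=
    fun a ha => ⟨ha.1, ha.2.1, h a ha.1 ha.2.1 ha.2.2⟩
  exact_mod_cast Set.ncard_le_ncard hsub (cntSet_finite _ _ _ _)

lemma cnt_succ (A B Q : ℤ) (w : Equiv.Perm ℤ) (h : A - 1 ≤ B) :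
    cnt A (B+1) Q w = cnt A B Q w + if Q < w (B+1) then 1 else 0 := by
  rw [cnt_split A B (B+1) Q w h (by omega), cnt_single]


def Supp (n : ℤ) (w : Equiv.Perm ℤ) : Prop := ∀ m : ℤ, m < 1 ∨ n < m → w m = m

lemma supp_one (n : ℤ) : Supp n 1 := fun m _ => rfl

lemma supp_mul {n : ℤ} {u v : Equiv.Perm ℤ} (hu : Supp n u) (hv : Supp n v) :
    Supp n (u * v) := fun m hm => by
  rw [Equiv.Perm.mul_apply, hv m hm, hu m hm]

lemma supp_mem {n : ℤ} {w : Equiv.Perm ℤ} (hw : Supp n w) {i : ℤ}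
    (h1 : 1 ≤ i) (h2 : i ≤ n) : 1 ≤ w i ∧ w i ≤ n := by
  by_contra hc
  have hout : w i < 1 ∨ n < w i := by omega
  have := hw (w i) hout
  have : w i = i := w.injective this
  omega

lemma swap_eval (a b i : ℤ) :
    Equiv.swap a b i = if i = a then b else if i = b then a else i := by
  rw [Equiv.swap_apply_def]

lemma supp_swap {n a b : ℤ} (ha1 : 1 ≤ a) (ha2 : a ≤ n) (hb1 : 1 ≤ b) (hb2 : b ≤ n) :
    Supp n (Equiv.swap a b) := by
  intro m hm
  rw [swap_eval]
  split_ifs <;> omega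

def invSet (w : Equiv.Perm ℤ) : Set (ℤ × ℤ) := {x | x.1 < x.2 ∧ w x.2 < w x.1}

noncomputable def nInv (w : Equiv.Perm ℤ) : ℕ := (invSet w).ncard

lemma invSet_finite {n : ℤ} {w : Equiv.Perm ℤ} (hw : Supp n w) : (invSet w).Finite := by
  apply ((Set.finite_Icc 1 n).prod (Set.finite_Icc 1 n)).subset
  rintro ⟨i, l⟩ ⟨hil, hv⟩
  simp only [Set.mem_prod, Set.mem_Icc]
  dsimp only at hil hv
  by_contra hc
  have hi : ¬ (1 ≤ i ∧ i ≤ n) ∨ ¬ (1 ≤ l ∧ l ≤ n) := by tauto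
  rcases le_or_gt 1 i with h1 | h1
  · rcases le_or_gt l n with h2 | h2
    · have hl1 : 1 ≤ l := by omega
      have hin : i ≤ n := by omega
      exact hc ⟨⟨h1, hin⟩, ⟨hl1, h2⟩⟩
    · have hwl : w l = l := hw l (Or.inr h2)
      rcases le_or_gt i n with h3 | h3
      · have := (supp_mem hw h1 h3).2; omega
      · have hwi : w i = i := hw i (Or.inr h3); omega
  · have hwi : w i = i := hw i (Or.inl h1)
    rcases le_or_gt l 0 with h2 | h2
    · have hwl : w l = l := hw l (Or.inl (by omega)); omega
    · rcases le_or_gt l n with h3 | h3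
      · have := (supp_mem hw (by omega) h3).1; omega
      · have hwl : w l = l := hw l (Or.inr h3); omega

lemma spair {j i l : ℤ} (hil : i < l) (hne : ¬(i = j ∧ l = j + 1)) :
    Equiv.swap j (j+1) i < Equiv.swap j (j+1) l := by
  rw [swap_eval, swap_eval]
  split_ifs <;> omega

lemma invSet_mul_swap_subset (w : Equiv.Perm ℤ) (j : ℤ) :
    invSet (w * Equiv.swap j (j+1)) ⊆
      (Prod.map (Equiv.swap j (j+1)) (Equiv.swap j (j+1))) '' invSet w ∪ {(j, j+1)} := by
  set s := Equiv.swap j (j+1) with hs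
  rintro ⟨i, l⟩ ⟨hil, hv⟩
  dsimp only at hil hv
  by_cases hsp : i = j ∧ l = j + 1
  · right; simp [hsp.1, hsp.2]
  · left
    refine ⟨(s i, s l), ⟨spair hil hsp, ?_⟩, ?_⟩
    · dsimp only
      simpa only [Equiv.Perm.mul_apply] using hv
    · simp only [Prod.map, Prod.mk.injEq]
      exact ⟨Equiv.swap_apply_self _ _ _, Equiv.swap_apply_self _ _ _⟩

lemma ascent_eq {w : Equiv.Perm ℤ} {j : ℤ} (hf : (invSet w).Finite)
    (h : w j < w (j+1)) :
    nInv (w * Equiv.swap j (j+1)) = nInv w + 1 := by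
  set s := Equiv.swap j (j+1) with hs
  have hset : invSet (w * s) = (Prod.map s s) '' invSet w ∪ {(j, j+1)} := by
    apply Set.Subset.antisymm (invSet_mul_swap_subset w j)
    rintro ⟨i, l⟩ (⟨⟨i0, l0⟩, ⟨hil0, hv0⟩, heq⟩ | hsp)
    · dsimp only at hil0 hv0
      simp only [Prod.map, Prod.mk.injEq] at heq
      obtain ⟨rfl, rfl⟩ := heq
      have hne : ¬(i0 = j ∧ l0 = j + 1) := by
        rintro ⟨rfl, rfl⟩
        omega
      refine ⟨spair hil0 hne, ?_⟩
      dsimp only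
      simp only [Equiv.Perm.mul_apply, hs, Equiv.swap_apply_self]
      exact hv0
    · simp only [Set.mem_singleton_iff, Prod.mk.injEq] at hsp
      obtain ⟨rfl, rfl⟩ := hsp
      refine ⟨by omega, ?_⟩
      dsimp only
      simp only [Equiv.Perm.mul_apply, hs, Equiv.swap_apply_left, Equiv.swap_apply_right]
      exact h
  have hinj : Function.Injective (Prod.map s s) :=
    Function.Injective.prodMap s.injective s.injective
  have hnotmem : (j, j+1) ∉ (Prod.map s s) '' invSet w := by
    rintro ⟨⟨i0, l0⟩, ⟨hil0, _⟩, heq⟩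
    simp only [Prod.map, Prod.mk.injEq] at heq
    have h1 : s i0 = j := heq.1
    have h2 : s l0 = j + 1 := heq.2
    rw [swap_eval] at h1 h2
    dsimp only at hil0
    split_ifs at h1 h2 <;> omega
  unfold nInv
  rw [hset, Set.ncard_union_eq (Set.disjoint_singleton_right.2 hnotmem)
    (hf.image _) (Set.finite_singleton _), Set.ncard_image_of_injective _ hinj,
    Set.ncard_singleton]

lemma invSet_mul_swap_finite {w : Equiv.Perm ℤ} {j : ℤ} (hf : (invSet w).Finite) :
    (invSet (w * Equiv.swap j (j+1))).Finite :=
  ((hf.image _).union (Set.finite_singleton _)).subset (invSet_mul_swap_subset w j)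

lemma descent_eq {w : Equiv.Perm ℤ} {j : ℤ} (hf : (invSet w).Finite)
    (h : w (j+1) < w j) :
    nInv w = nInv (w * Equiv.swap j (j+1)) + 1 := by
  have hf' : (invSet (w * Equiv.swap j (j+1))).Finite := invSet_mul_swap_finite hf
  have h2 : (w * Equiv.swap j (j+1)) j < (w * Equiv.swap j (j+1)) (j+1) := by
    simp only [Equiv.Perm.mul_apply, Equiv.swap_apply_left, Equiv.swap_apply_right]
    exact h
  have := ascent_eq hf' h2
  rwa [mul_assoc, Equiv.swap_mul_self, mul_one] at this


lemma adj_cases {w : Equiv.Perm ℤ} {j : ℤ} (hf : (invSet w).Finite) :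
    nInv (w * Equiv.swap j (j+1)) = nInv w + 1 ∨
      nInv w = nInv (w * Equiv.swap j (j+1)) + 1 := by
  rcases lt_trichotomy (w j) (w (j+1)) with h | h | h
  · exact Or.inl (ascent_eq hf h)
  · exact absurd (w.injective h) (by omega)
  · exact Or.inr (descent_eq hf h)

lemma swap_decompose {a c : ℤ} (hac : a < c) :
    Equiv.swap a (c+1) = Equiv.swap c (c+1) * Equiv.swap a c * Equiv.swap c (c+1) := by
  have h1 : Equiv.swap c (c+1) * Equiv.swap a c * (Equiv.swap c (c+1))⁻¹ =
      Equiv.swap (Equiv.swap c (c+1) a) (Equiv.swap c (c+1) c) :=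
    (Equiv.swap_apply_apply _ a c).symm
  rw [Equiv.swap_inv] at h1
  rw [h1]
  congr 1
  · rw [swap_eval]; split_ifs <;> omega
  · rw [swap_eval]; split_ifs <;> omega

lemma swap_decrease : ∀ d : ℕ, ∀ a b : ℤ, ∀ w : Equiv.Perm ℤ, (b - a).toNat = d →
    a < b → w b < w a → (invSet w).Finite →
    nInv (w * Equiv.swap a b) < nInv w ∧ (invSet (w * Equiv.swap a b)).Finite := by
  intro d
  induction d using Nat.strong_induction_on with
  | _ d IH =>
    intro a b w hd hab hval hf
    rcases eq_or_lt_of_le (by omega : a + 1 ≤ b) with heq | hlt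
    · -- adjacent case : b = a + 1
      obtain rfl : b = a + 1 := heq.symm
      have h1 := descent_eq hf hval
      exact ⟨by omega, invSet_mul_swap_finite hf⟩
    · -- b = c + 1, c > a
      obtain ⟨c, rfl⟩ : ∃ c, b = c + 1 := ⟨b - 1, by omega⟩
      have hac : a < c := by omega
      have hdec : Equiv.swap a (c+1) = Equiv.swap c (c+1) * Equiv.swap a c * Equiv.swap c (c+1) :=
        swap_decompose hac
      set s := Equiv.swap c (c+1) with hs
      set w1 := w * s with hw1
      have hfw1 : (invSet w1).Finite := invSet_mul_swap_finite hf
      have hw1a : w1 a = w a := by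
        rw [hw1, Equiv.Perm.mul_apply, hs, swap_eval]; split_ifs <;> first | omega | rfl
      have hw1c : w1 c = w (c+1) := by
        rw [hw1, Equiv.Perm.mul_apply, hs, Equiv.swap_apply_left]
      have hw1b : w1 (c+1) = w c := by
        rw [hw1, Equiv.Perm.mul_apply, hs, Equiv.swap_apply_right]
      set u := w1 * Equiv.swap a c with hu
      have hIH : nInv u < nInv w1 ∧ (invSet u).Finite := by
        apply IH (c - a).toNat (by omega) a c w1 rfl hac _ hfw1
        rw [hw1a, hw1c]; omega
      have hua : u c = w a := by
        rw [hu, Equiv.Perm.mul_apply, Equiv.swap_apply_right, hw1a]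
      have hub : u (c+1) = w c := by
        rw [hu, Equiv.Perm.mul_apply, swap_eval]
        split_ifs with h1 h2 <;> first | omega | (try rw [hw1b]) | rfl
      have hfinal : w * Equiv.swap a (c+1) = u * s := by
        rw [hdec, hu, hw1]
        group
      rcases lt_trichotomy (w c) (w (c+1)) with hcb | hcb | hcb
      · -- ascent at c for w : nInv w1 = nInv w + 1
        have h1 : nInv w1 = nInv w + 1 := ascent_eq hf hcb
        -- descent at c for u : u c = w a > w c = u (c+1)
        have h2 : u (c+1) < u c := by rw [hua, hub]; omega
        have h3 : nInv u = nInv (u * s) + 1 := descent_eq hIH.2 h2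
        constructor
        · rw [hfinal]; omega
        · rw [hfinal]; exact invSet_mul_swap_finite hIH.2
      · exact absurd (w.injective hcb) (by omega)
      · -- descent at c for w : nInv w = nInv w1 + 1
        have h1 : nInv w = nInv w1 + 1 := descent_eq hf hcb
        have h3 := adj_cases (j := c) hIH.2
        rw [← hs] at h3
        constructor
        · rw [hfinal]; omega
        · rw [hfinal]; exact invSet_mul_swap_finite hIH.2

lemma swap_lt {a b : ℤ} {w : Equiv.Perm ℤ} (hab : a < b) (hval : w b < w a)
    (hf : (invSet w).Finite) : nInv (w * Equiv.swap a b) < nInv w :=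
  (swap_decrease (b - a).toNat a b w rfl hab hval hf).1

lemma exists_descent {n : ℤ} {w : Equiv.Perm ℤ} (hw : Supp n w) (hne : w ≠ 1) :
    ∃ j, 1 ≤ j ∧ j < n ∧ w (j+1) < w j := by
  by_contra hc
  push_neg at hc
  have hasc : ∀ j, 1 ≤ j → j < n → w j < w (j+1) := by
    intro j h1 h2
    rcases lt_trichotomy (w j) (w (j+1)) with h | h | h
    · exact h
    · exact absurd (w.injective h) (by omega)
    · exact absurd h (not_lt.2 (hc j h1 h2))
  apply hne
  apply Equiv.ext
  intro i
  simp only [Equiv.Perm.one_apply]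
  rcases le_or_gt i 0 with hi | hi
  · exact hw i (Or.inl (by omega))
  rcases le_or_gt i n with hin | hin
  · -- 1 ≤ i ≤ n
    have hlow : ∀ j : ℕ, ∀ i : ℤ, i = 1 + j → i ≤ n → i ≤ w i := by
      intro j
      induction j with
      | zero => intro i hi h2; subst hi; simpa using (supp_mem hw (by omega) (by omega)).1
      | succ j ih =>
        intro i hi h2
        have h3 := hasc (i-1) (by omega) (by omega)
        have h4 := ih (i-1) (by push_cast at hi ⊢; omega) (by omega)
        have h5 : i - 1 + 1 = i := by omega
        rw [h5] at h3
        omega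
    have hhigh : ∀ j : ℕ, ∀ i : ℤ, i = n - j → 1 ≤ i → w i ≤ i := by
      intro j
      induction j with
      | zero => intro i hi h1; subst hi; simpa using (supp_mem hw h1 (by omega)).2
      | succ j ih =>
        intro i hi h1
        rcases le_or_gt n i with h | h
        · exact (supp_mem hw h1 (by omega)).2.trans (by omega)
        · have h3 := hasc i h1 (by omega)
          have h4 := ih (i+1) (by push_cast at hi ⊢; omega) (by omega)
          omega
    have := hlow (i-1).toNat i (by omega) hin
    have := hhigh (n - i).toNat i (by omega) (by omega)
    omega
  · exact hw i (Or.inr hin)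

lemma agens_mem {n x : ℤ} (h1 : 1 ≤ x) (h2 : x < n) :
    Equiv.swap x (x+1) ∈ AGens 1 n := ⟨x, h1, h2, rfl⟩

lemma agens_elim {n : ℤ} {s : Equiv.Perm ℤ} (hs : s ∈ AGens 1 n) :
    ∃ i : ℤ, 1 ≤ i ∧ i < n ∧ s = Equiv.swap i (i+1) := hs

lemma agens_supp {n : ℤ} {s : Equiv.Perm ℤ} (hs : s ∈ AGens 1 n) : Supp n s := by
  obtain ⟨i, h1, h2, rfl⟩ := hs
  exact supp_swap h1 (by omega) (by omega) h2

lemma supp_inv {n : ℤ} {w : Equiv.Perm ℤ} (hw : Supp n w) : Supp n w⁻¹ := by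
  intro m hm
  have h1 : w m = m := hw m hm
  calc w⁻¹ m = w⁻¹ (w m) := by rw [h1]
  _ = m := w.symm_apply_apply m

lemma supp_of_mem_closure {n : ℤ} {x : Equiv.Perm ℤ}
    (hx : x ∈ Subgroup.closure (AGens 1 n)) : Supp n x := by
  induction hx using Subgroup.closure_induction with
  | mem y hy => exact agens_supp hy
  | one => exact supp_one n
  | mul y z _ _ hy hz => exact supp_mul hy hz
  | inv y _ hy => exact supp_inv hy

lemma supp_list_prod {n : ℤ} : ∀ l : List (Equiv.Perm ℤ),
    (∀ y ∈ l, y ∈ AGens 1 n) → Supp n l.prod := by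
  intro l
  induction l with
  | nil => intro _; simpa using supp_one n
  | cons a l ih =>
    intro h
    rw [List.prod_cons]
    exact supp_mul (agens_supp (h a (by simp))) (ih fun y hy => h y (by simp [hy]))

lemma nInv_one : nInv (1 : Equiv.Perm ℤ) = 0 := by
  unfold nInv
  rw [show invSet (1 : Equiv.Perm ℤ) = ∅ by
    ext ⟨i, l⟩; simp only [invSet, Set.mem_setOf_eq, Set.mem_empty_iff_false, iff_false]
    rintro ⟨h1, h2⟩; simp only [Equiv.Perm.one_apply] at h2; omega]
  exact Set.ncard_empty _

lemma nInv_le_length {n : ℤ} : ∀ l : List (Equiv.Perm ℤ),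
    (∀ y ∈ l, y ∈ AGens 1 n) → nInv l.prod ≤ l.length := by
  intro l
  induction l using List.reverseRecOn with
  | nil => intro _; simp [nInv_one]
  | append_singleton l s ih =>
    intro h
    have hl : ∀ y ∈ l, y ∈ AGens 1 n := fun y hy => h y (by simp [hy])
    have hs : s ∈ AGens 1 n := h s (by simp)
    obtain ⟨i, h1, h2, rfl⟩ := hs
    rw [List.prod_append, List.prod_singleton, List.length_append, List.length_singleton]
    have hfin : (invSet l.prod).Finite := invSet_finite (supp_list_prod l hl)
    rcases adj_cases (j := i) hfin with hh | hh <;>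
      have := ih hl <;> omega

lemma word_of_supp {n : ℤ} : ∀ m : ℕ, ∀ w : Equiv.Perm ℤ, Supp n w → nInv w = m →
    ∃ l : List (Equiv.Perm ℤ), (∀ y ∈ l, y ∈ AGens 1 n) ∧ l.prod = w ∧ l.length = nInv w := by
  intro m
  induction m using Nat.strong_induction_on with
  | _ m IH =>
    intro w hw hm
    by_cases hone : w = 1
    · exact ⟨[], by simp, by simp [hone], by simp [hone, nInv_one]⟩
    · obtain ⟨j, hj1, hj2, hdesc⟩ := exists_descent hw hone
      set s := Equiv.swap j (j+1) with hs
      have hfin : (invSet w).Finite := invSet_finite hw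
      have h1 : nInv w = nInv (w * s) + 1 := descent_eq hfin hdesc
      have hws : Supp n (w * s) := supp_mul hw (supp_swap hj1 (by omega) (by omega) (by omega))
      obtain ⟨l, hmem, hprod, hlen⟩ := IH (nInv (w * s)) (by omega) (w * s) hws rfl
      refine ⟨l ++ [s], ?_, ?_, ?_⟩
      · intro y hy
        rcases List.mem_append.1 hy with h | h
        · exact hmem y h
        · simp only [List.mem_singleton] at h
          subst h
          exact agens_mem hj1 hj2
      · rw [List.prod_append, List.prod_singleton, hprod, mul_assoc, hs,
          Equiv.swap_mul_self, mul_one]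
      · rw [List.length_append, List.length_singleton, hlen]; omega

lemma word_exists {n : ℤ} {w : Equiv.Perm ℤ} (hw : Supp n w) :
    ∃ l : List (Equiv.Perm ℤ), (∀ y ∈ l, y ∈ AGens 1 n) ∧ l.prod = w ∧ l.length = nInv w :=
  word_of_supp (nInv w) w hw rfl

lemma wlen_eq_nInv {n : ℤ} {w : Equiv.Perm ℤ} (hw : Supp n w) :
    wlen (AGens 1 n) w = nInv w := by
  obtain ⟨l, hmem, hprod, hlen⟩ := word_exists hw
  apply le_antisymm
  · exact Nat.sInf_le ⟨l, hlen, hmem, hprod⟩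
  · have hne : {m | ∃ l' : List (Equiv.Perm ℤ), l'.length = m ∧ (∀ x ∈ l', x ∈ AGens 1 n) ∧
        l'.prod = w}.Nonempty := ⟨nInv w, l, hlen, hmem, hprod⟩
    apply le_csInf hne
    rintro m ⟨l', hlen', hmem', hprod'⟩
    have := nInv_le_length l' hmem'
    rw [hprod'] at this
    omega


lemma mul_swap_apply (w : Equiv.Perm ℤ) (a b i : ℤ) :
    (w * Equiv.swap a b) i = w (Equiv.swap a b i) := rfl

lemma rA_mul_swap {a b P Q : ℤ} (w : Equiv.Perm ℤ) (hab : a < b) (ha : 1 ≤ a) :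
    rA P Q (w * Equiv.swap a b) = rA P Q w
      - (if a ≤ P ∧ P < b ∧ w b ≤ Q ∧ Q < w a then 1 else 0)
      + (if a ≤ P ∧ P < b ∧ w a ≤ Q ∧ Q < w b then 1 else 0) := by
  have hsw : ∀ i, a + 1 ≤ i → i ≤ b - 1 → Equiv.swap a b i = i := by
    intro i h1 h2; rw [swap_eval]; split_ifs <;> omega
  have hlow : ∀ i, i ≤ a - 1 → Equiv.swap a b i = i := by
    intro i h1; rw [swap_eval]; split_ifs <;> omega
  have hhigh : ∀ i, b + 1 ≤ i → Equiv.swap a b i = i := by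
    intro i h1; rw [swap_eval]; split_ifs <;> omega
  rcases lt_or_ge P a with hPa | hPa
  · -- P < a : everything equal
    have h1 : rA P Q (w * Equiv.swap a b) = rA P Q w := by
      rw [rA_eq_cnt, rA_eq_cnt]
      apply cnt_congr
      intro i h1 h2
      rw [mul_swap_apply, hlow i (by omega)]
    rw [h1]
    have : ¬ (a ≤ P) := by omega
    simp [this]
  rcases lt_or_ge P b with hPb | hPb
  · -- a ≤ P < b
    have key : ∀ u : Equiv.Perm ℤ, cnt 1 P Q u =
        cnt 1 (a-1) Q u + cnt a a Q u + cnt (a+1) P Q u := by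
      intro u
      rw [cnt_split 1 (a-1) P Q u (by omega) (by omega),
        show a - 1 + 1 = a by omega,
        cnt_split a a P Q u (by omega) (by omega)]
      ring
    rw [rA_eq_cnt, rA_eq_cnt, key, key]
    have e1 : cnt 1 (a-1) Q (w * Equiv.swap a b) = cnt 1 (a-1) Q w := by
      apply cnt_congr; intro i h1 h2
      rw [mul_swap_apply, hlow i (by omega)]
    have e2 : cnt (a+1) P Q (w * Equiv.swap a b) = cnt (a+1) P Q w := by
      apply cnt_congr; intro i h1 h2
      rw [mul_swap_apply, hsw i (by omega) (by omega)]
    have e3 : cnt a a Q (w * Equiv.swap a b) = if Q < w b then 1 else 0 := by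
      rw [cnt_single, mul_swap_apply, Equiv.swap_apply_left]
    have e4 : cnt a a Q w = if Q < w a then 1 else 0 := cnt_single a Q w
    rw [e1, e2, e3, e4]
    ring
    have hb : a ≤ P ∧ P < b := ⟨hPa, hPb⟩
    split_ifs <;> omega
  · -- b ≤ P
    have key : ∀ u : Equiv.Perm ℤ, cnt 1 P Q u =
        cnt 1 (a-1) Q u + cnt a a Q u + cnt (a+1) (b-1) Q u + cnt b b Q u
          + cnt (b+1) P Q u := by
      intro u
      rw [cnt_split 1 (a-1) P Q u (by omega) (by omega),
        show a - 1 + 1 = a by omega,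
        cnt_split a a P Q u (by omega) (by omega),
        cnt_split (a+1) (b-1) P Q u (by omega) (by omega),
        show b - 1 + 1 = b by omega,
        cnt_split b b P Q u (by omega) (by omega)]
      ring
    rw [rA_eq_cnt, rA_eq_cnt, key, key]
    have e1 : cnt 1 (a-1) Q (w * Equiv.swap a b) = cnt 1 (a-1) Q w := by
      apply cnt_congr; intro i h1 h2; rw [mul_swap_apply, hlow i (by omega)]
    have e2 : cnt (a+1) (b-1) Q (w * Equiv.swap a b) = cnt (a+1) (b-1) Q w := by
      apply cnt_congr; intro i h1 h2; rw [mul_swap_apply, hsw i (by omega) (by omega)]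
    have e5 : cnt (b+1) P Q (w * Equiv.swap a b) = cnt (b+1) P Q w := by
      apply cnt_congr; intro i h1 h2; rw [mul_swap_apply, hhigh i (by omega)]
    have e3 : cnt a a Q (w * Equiv.swap a b) = if Q < w b then 1 else 0 := by
      rw [cnt_single, mul_swap_apply, Equiv.swap_apply_left]
    have e4 : cnt b b Q (w * Equiv.swap a b) = if Q < w a then 1 else 0 := by
      rw [cnt_single, mul_swap_apply, Equiv.swap_apply_right]
    have e6 : cnt a a Q w = if Q < w a then 1 else 0 := cnt_single a Q w
    have e7 : cnt b b Q w = if Q < w b then 1 else 0 := cnt_single b Q w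
    rw [e1, e2, e3, e4, e5, e6, e7]
    have hb : ¬ (P < b) := by omega
    split_ifs <;> omega

lemma swap_reflection {n : ℤ} : ∀ d : ℕ, ∀ i j : ℤ, (j - i).toNat = d → 1 ≤ i → i < j → j ≤ n →
    ∃ g ∈ Subgroup.closure (AGens 1 n), ∃ s ∈ AGens 1 n,
      Equiv.swap i j = g * s * g⁻¹ := by
  intro d
  induction d using Nat.strong_induction_on with
  | _ d IH =>
    intro i j hd h1 h2 h3
    rcases eq_or_lt_of_le (by omega : i + 1 ≤ j) with heq | hlt
    · refine ⟨1, Subgroup.one_mem _, Equiv.swap i (i+1), agens_mem h1 (by omega), ?_⟩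
      rw [one_mul, inv_one, mul_one, ← heq]
    · obtain ⟨c, rfl⟩ : ∃ c, j = c + 1 := ⟨j - 1, by omega⟩
      have hac : i < c := by omega
      obtain ⟨g, hg, s, hsA, hseq⟩ := IH (c - i).toNat (by omega) i c rfl h1 hac (by omega)
      set t := Equiv.swap c (c+1) with ht
      have htA : t ∈ AGens 1 n := agens_mem (by omega) (by omega)
      refine ⟨t * g, Subgroup.mul_mem _ (Subgroup.subset_closure htA) hg, s, hsA, ?_⟩
      have hdec := swap_decompose hac
      rw [hdec, ← ht, hseq]
      rw [show t * (g * s * g⁻¹) * t = (t * g) * s * (t * g)⁻¹ by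
        rw [mul_inv_rev]
        have : t⁻¹ = t := Equiv.swap_inv c (c+1)
        rw [this]; group]


lemma cnt_interval {A B Q C : ℤ} {w : Equiv.Perm ℤ}
    (h : ∀ a, A ≤ a → a ≤ B → (Q < w a ↔ C < a)) :
    cnt A B Q w = max 0 (B - max (A-1) C) := by
  unfold cnt
  rw [show {a : ℤ | A ≤ a ∧ a ≤ B ∧ Q < w a} = Set.Ioc (max (A-1) C) B by
    ext a
    simp only [Set.mem_setOf_eq, Set.mem_Ioc, max_lt_iff]
    constructor
    · rintro ⟨h1, h2, h3⟩; exact ⟨⟨by omega, (h a h1 h2).1 h3⟩, h2⟩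
    · rintro ⟨⟨h1, h2⟩, h3⟩
      exact ⟨by omega, h3, (h a (by omega) h3).2 h2⟩]
  rw [← Finset.coe_Ioc, Set.ncard_coe_finset, Int.card_Ioc]
  omega

lemma rA_vA {k p q : ℤ} (hk : 0 < k) (hp : 0 < p) (hq : 0 < q) (hkp : k ≤ p)
    (hkq : p - q < k) (v : Equiv.Perm ℤ) (hv : ∀ i, v i = vAfun k p q i) (P Q : ℤ) :
    rA P Q v = max 0 (min P (p-k) - max 0 Q)
      + max 0 (min P p - max (min P (p-k)) (Q - q + p - k))
      + max 0 (min P (q+k) - max (min P p) (Q+k))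
      + max 0 (P - max (min P (q+k)) Q) := by
  rcases lt_or_ge P 0 with hP | hP
  · rw [rA_eq_cnt, cnt_empty _ _ _ _ (by omega)]
    omega
  · set m1 := min P (p-k) with hm1
    set m2 := min P p with hm2
    set m3 := min P (q+k) with hm3
    have hm10 : 0 ≤ m1 := by omega
    have hm12 : m1 ≤ m2 := by omega
    have hm23 : m2 ≤ m3 := by omega
    have hm3P : m3 ≤ P := by omega
    rw [rA_eq_cnt,
      cnt_split 1 m1 P Q v (by omega) (by omega),
      cnt_split (m1+1) m2 P Q v (by omega) (by omega),
      cnt_split (m2+1) m3 P Q v (by omega) (by omega)]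
    have e1 : cnt 1 m1 Q v = max 0 (m1 - max 0 Q) := by
      rw [cnt_interval (C := Q) (fun a h1 h2 => by
        rw [hv]; unfold vAfun; split_ifs <;> omega)]
      omega
    have e2 : cnt (m1+1) m2 Q v = max 0 (m2 - max m1 (Q - q + p - k)) := by
      rw [cnt_interval (C := Q - q + p - k) (fun a h1 h2 => by
        rw [hv]; unfold vAfun; split_ifs <;> omega)]
      omega
    have e3 : cnt (m2+1) m3 Q v = max 0 (m3 - max m2 (Q+k)) := by
      rw [cnt_interval (C := Q + k) (fun a h1 h2 => by
        rw [hv]; unfold vAfun; split_ifs <;> omega)]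
      omega
    have e4 : cnt (m3+1) P Q v = max 0 (P - max m3 Q) := by
      rw [cnt_interval (C := Q) (fun a h1 h2 => by
        rw [hv]; unfold vAfun; split_ifs <;> omega)]
      omega
    rw [e1, e2, e3, e4]
    ring

lemma supp_pos {n : ℤ} {w : Equiv.Perm ℤ} (hw : Supp n w) {i : ℤ} (hi : 1 ≤ i) :
    1 ≤ w i := by
  rcases le_or_gt i n with h | h
  · exact (supp_mem hw hi h).1
  · rw [hw i (Or.inr h)]; omega

-- rank is monotone decreasing in Q
lemma rA_mono_Q {P Q Q' : ℤ} {w : Equiv.Perm ℤ} (h : Q' ≤ Q) :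
    rA P Q w ≤ rA P Q' w := by
  rw [rA_eq_cnt, rA_eq_cnt]
  exact cnt_mono _ _ _ _ _ _ (fun a _ _ hQ => by omega)

-- rank is monotone increasing in P
lemma rA_mono_P {P P' Q : ℤ} {w : Equiv.Perm ℤ} (h : P' ≤ P) :
    rA P' Q w ≤ rA P Q w := by
  rcases lt_or_ge P' 1 with h1 | h1
  · rw [rA_eq_cnt P' Q w, cnt_empty _ _ _ _ (by omega)]
    exact cnt_nonneg _ _ _ _
  · rw [rA_eq_cnt, rA_eq_cnt, cnt_split 1 P' P Q w (by omega) h]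
    have := cnt_nonneg (P'+1) P Q w
    omega

-- Lipschitz in Q
lemma rA_lipschitz_Q (P Q : ℤ) (w : Equiv.Perm ℤ) :
    rA P Q w ≤ rA P (Q+1) w + 1 := by
  rw [rA_eq_cnt, rA_eq_cnt]
  unfold cnt
  have hsub : {a : ℤ | 1 ≤ a ∧ a ≤ P ∧ Q < w a} ⊆
      {a : ℤ | 1 ≤ a ∧ a ≤ P ∧ Q + 1 < w a} ∪ {w⁻¹ (Q+1)} := by
    intro a ⟨h1, h2, h3⟩
    rcases lt_or_ge (Q+1) (w a) with h | h
    · exact Or.inl ⟨h1, h2, h⟩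
    · right
      have : w a = Q + 1 := by omega
      simp only [Set.mem_singleton_iff]
      exact w.injective (by rw [show w (w⁻¹ (Q+1)) = Q+1 from w.apply_symm_apply (Q+1), this])
  have hle := Set.ncard_le_ncard hsub
    (((cntSet_finite 1 P (Q+1) w).union (Set.finite_singleton _)))
  have hun := Set.ncard_union_le {a : ℤ | 1 ≤ a ∧ a ≤ P ∧ Q + 1 < w a} {w⁻¹ (Q+1)}
  rw [Set.ncard_singleton] at hun
  omega

lemma rA_lipschitz_P (P Q : ℤ) (w : Equiv.Perm ℤ) :
    rA (P+1) Q w ≤ rA P Q w + 1 := by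
  rcases lt_or_ge (P+1) 1 with h | h
  · rw [rA_eq_cnt (P+1), cnt_empty _ _ _ _ (by omega)]
    have := cnt_nonneg 1 P Q w
    rw [rA_eq_cnt]
    omega
  · rw [rA_eq_cnt (P+1), cnt_succ 1 P Q w (by omega), ← rA_eq_cnt]
    split_ifs <;> omega

-- rank lower bound from the box (p, q) : Lipschitz both ways
lemma rA_box_bound {p q k P Q : ℤ} {w : Equiv.Perm ℤ} (hK : k ≤ rA p q w) :
    k - max 0 (p - P) - max 0 (Q - q) ≤ rA P Q w := by
  have step1 : k - max 0 (Q - q) ≤ rA p Q w := by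
    rcases le_or_gt Q q with h | h
    · have := rA_mono_Q (P := p) (w := w) h
      omega
    · have hgen : ∀ d : ℕ, ∀ Q' : ℤ, Q' = q + d → rA p q w ≤ rA p Q' w + d := by
        intro d
        induction d with
        | zero =>
          intro Q' h1
          obtain rfl : Q' = q := by push_cast at h1; omega
          simp
        | succ d ih =>
          intro Q' h1
          have h2 := ih (Q' - 1) (by push_cast at h1 ⊢; omega)
          have h3 := rA_lipschitz_Q p (Q'-1) w
          rw [show Q' - 1 + 1 = Q' by omega] at h3
          push_cast
          omega
      have := hgen (Q - q).toNat Q (by omega)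
      omega
  rcases le_or_gt p P with h | h
  · have := rA_mono_P (Q := Q) (w := w) h
    omega
  · have hgen : ∀ d : ℕ, ∀ P' : ℤ, P' = p - d → rA p Q w ≤ rA P' Q w + d := by
      intro d
      induction d with
      | zero =>
        intro P' h1
        obtain rfl : P' = p := by push_cast at h1; omega
        simp
      | succ d ih =>
        intro P' h1
        have h2 := ih (P' + 1) (by push_cast at h1 ⊢; omega)
        have h3 := rA_lipschitz_P P' Q w
        push_cast
        omega
    have := hgen (p - P).toNat P (by omega)
    omega

-- rank lower bound : at most max(Q,0) of the values w i (i ∈ [1,P]) can be ≤ Q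
lemma rA_ge {n P Q : ℤ} {w : Equiv.Perm ℤ} (hw : Supp n w) :
    P - max 0 Q ≤ rA P Q w := by
  rcases lt_or_ge P 1 with h | h
  · rw [rA_eq_cnt, cnt_empty _ _ _ _ (by omega)]
    omega
  · set S := {i : ℤ | 1 ≤ i ∧ i ≤ P ∧ w i ≤ Q} with hS
    have hSfin : S.Finite := (Set.finite_Icc 1 P).subset fun a ha => Set.mem_Icc.2 ⟨ha.1, ha.2.1⟩
    have hpart : rA P Q w + (S.ncard : ℤ) = P := by
      rw [rA_eq_cnt]
      unfold cnt
      rw [← Nat.cast_add, ← Set.ncard_union_eq (by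
          rw [Set.disjoint_left]; rintro a ⟨_, _, h1⟩ ⟨_, _, h2⟩; omega)
        (cntSet_finite 1 P Q w) hSfin]
      rw [show {a : ℤ | 1 ≤ a ∧ a ≤ P ∧ Q < w a} ∪ S = Set.Icc 1 P by
        ext a
        simp only [hS, Set.mem_union, Set.mem_setOf_eq, Set.mem_Icc]
        constructor
        · rintro (⟨h1, h2, _⟩ | ⟨h1, h2, _⟩) <;> exact ⟨h1, h2⟩
        · rintro ⟨h1, h2⟩
          rcases lt_or_ge Q (w a) with h3 | h3
          · exact Or.inl ⟨h1, h2, h3⟩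
          · exact Or.inr ⟨h1, h2, h3⟩]
      rw [← Finset.coe_Icc, Set.ncard_coe_finset, Int.card_Icc]
      omega
    have himg : (w : ℤ → ℤ) '' S ⊆ Set.Icc 1 Q := by
      rintro b ⟨a, ⟨h1, _, h3⟩, rfl⟩
      exact Set.mem_Icc.2 ⟨supp_pos hw h1, h3⟩
    have hcard : S.ncard ≤ (Set.Icc 1 Q).ncard := by
      rw [← Set.ncard_image_of_injective S w.injective]
      exact Set.ncard_le_ncard himg (Set.finite_Icc 1 Q)
    have hQcard : (Set.Icc 1 Q).ncard = Q.toNat := by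
      rw [← Finset.coe_Icc, Set.ncard_coe_finset, Int.card_Icc]
      omega
    omega


lemma bruhat_forward {n p q k : ℤ} {v0 v1 : Equiv.Perm ℤ}
    (h : bruhatLe (AGens 1 n) v0 v1) (hs0 : Supp n v0) (h0 : k ≤ rA p q v0) :
    Supp n v1 ∧ k ≤ rA p q v1 := by
  induction h with
  | refl => exact ⟨hs0, h0⟩
  | @tail b c hab hbc ih =>
    obtain ⟨⟨g, hg, s, hsA, hceq⟩, hwl⟩ := hbc
    obtain ⟨hsb, hkb⟩ := ih
    obtain ⟨i, hi1, hi2, rfl⟩ := hsA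
    have hgs : Supp n g := supp_of_mem_closure hg
    have hconj : g * Equiv.swap i (i+1) * g⁻¹ = Equiv.swap (g i) (g (i+1)) :=
      (Equiv.swap_apply_apply g i (i+1)).symm
    rw [hconj] at hceq
    have hgi := supp_mem hgs hi1 (by omega)
    have hgi1 := supp_mem hgs (by omega : (1:ℤ) ≤ i + 1) (by omega)
    have hne : g i ≠ g (i+1) := fun hh => by
      have := g.injective hh; omega
    -- normalize so that a < b'
    obtain ⟨a, b', ha1, hbn, hab, hceq2⟩ :
        ∃ a b' : ℤ, 1 ≤ a ∧ b' ≤ n ∧ a < b' ∧ c = b * Equiv.swap a b' := by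
      rcases lt_or_gt_of_ne hne with hlt | hgt
      · exact ⟨g i, g (i+1), hgi.1, hgi1.2, hlt, hceq⟩
      · exact ⟨g (i+1), g i, hgi1.1, hgi.2, hgt, by rwa [Equiv.swap_comm]⟩
    have hsc : Supp n c := by
      rw [hceq2]
      exact supp_mul hsb (supp_swap ha1 (by omega) (by omega) hbn)
    refine ⟨hsc, ?_⟩
    rw [wlen_eq_nInv hsb, wlen_eq_nInv hsc] at hwl
    have hval : b a < b b' := by
      rcases lt_trichotomy (b a) (b b') with h1 | h1 | h1
      · exact h1
      · exact absurd (b.injective h1) (by omega)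
      · exfalso
        have := swap_lt hab h1 (invSet_finite hsb)
        rw [← hceq2] at this
        omega
    have hmaster := rA_mul_swap (P := p) (Q := q) b hab ha1
    rw [← hceq2] at hmaster
    have hneg : ¬ (a ≤ p ∧ p < b' ∧ b b' ≤ q ∧ q < b a) := by
      rintro ⟨_, _, h1, h2⟩; omega
    rw [if_neg hneg] at hmaster
    split_ifs at hmaster <;> omega

lemma bruhat_chain {n : ℤ} (u : Equiv.Perm ℤ) (hu : Supp n u) :
    ∀ m : ℕ, ∀ v : Equiv.Perm ℤ, Supp n v → nInv v = m →
      (∀ P Q : ℤ, rA P Q u ≤ rA P Q v) → bruhatLe (AGens 1 n) u v := by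
  classical
  intro m
  induction m using Nat.strong_induction_on with
  | _ m IH =>
    intro v hv hm hcrit
    by_cases huv : u = v
    · subst huv; exact Relation.ReflTransGen.refl
    -- least position where u and v differ
    obtain ⟨i, hine, hleast⟩ : ∃ i : ℤ, (u i ≠ v i) ∧ ∀ a : ℤ, u a ≠ v a → i ≤ a := by
      apply Int.exists_least_of_bdd
      · refine ⟨1, fun z hz => ?_⟩
        by_contra hcon
        push_neg at hcon
        rw [hu z (Or.inl (by omega)), hv z (Or.inl (by omega))] at hz
        exact hz rfl
      · by_contra hcon
        push_neg at hcon
        exact huv (Equiv.ext fun a => by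
          by_contra h2
          exact h2 (hcon a))
    have hi1 : 1 ≤ i := by
      by_contra hcon
      exact hine (by rw [hu i (Or.inl (by omega)), hv i (Or.inl (by omega))])
    have hin : i ≤ n := by
      by_contra hcon
      exact hine (by rw [hu i (Or.inr (by omega)), hv i (Or.inr (by omega))])
    have hprefix : ∀ a, 1 ≤ a → a ≤ i - 1 → u a = v a := by
      intro a _ h2
      by_contra hcon
      have := hleast a hcon
      omega
    -- u i < v i
    have hui_lt : u i < v i := by
      have hc := hcrit i (u i - 1)
      rw [rA_eq_cnt, rA_eq_cnt, cnt_split 1 (i-1) i (u i - 1) u (by omega) (by omega),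
        cnt_split 1 (i-1) i (u i - 1) v (by omega) (by omega),
        show i - 1 + 1 = i by omega, cnt_single, cnt_single] at hc
      have e1 : cnt 1 (i-1) (u i - 1) u = cnt 1 (i-1) (u i - 1) v :=
        cnt_congr _ _ _ _ _ _ (fun a h1 h2 => by rw [hprefix a h1 h2])
      rw [e1] at hc
      rcases lt_or_ge (v i) (u i) with h | h
      · split_ifs at hc <;> omega
      · rcases eq_or_lt_of_le h with h2 | h2
        · exact absurd h2 hine
        · exact h2
    -- least j with i < j, u i ≤ v j < v i
    obtain ⟨j, ⟨hij, hj1, hj2⟩, hjleast⟩ : ∃ j : ℤ, (i < j ∧ u i ≤ v j ∧ v j < v i) ∧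
        ∀ a : ℤ, (i < a ∧ u i ≤ v a ∧ v a < v i) → j ≤ a := by
      apply Int.exists_least_of_bdd
      · exact ⟨i + 1, fun z hz => by omega⟩
      · refine ⟨v⁻¹ (u i), ?_, ?_, ?_⟩
        · rcases lt_trichotomy (v⁻¹ (u i)) i with h | h | h
          · exfalso
            have h1 : v (v⁻¹ (u i)) = u i := v.apply_symm_apply (u i)
            rcases le_or_gt 1 (v⁻¹ (u i)) with h2 | h2
            · have := hprefix _ h2 (by omega)
              rw [← this] at h1
              have := u.injective h1
              omega
            · have h3 := hv (v⁻¹ (u i)) (Or.inl (by omega))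
              rw [h3] at h1
              have h4 := supp_pos hu (le_refl 1)
              have h5 : 1 ≤ u i := supp_pos hu hi1
              omega
          · exfalso
            have h1 : v (v⁻¹ (u i)) = u i := v.apply_symm_apply (u i)
            rw [h] at h1
            omega
          · exact h
        · rw [show v (v⁻¹ (u i)) = u i from v.apply_symm_apply (u i)]
        · rw [show v (v⁻¹ (u i)) = u i from v.apply_symm_apply (u i)]; omega
    have hjn : j ≤ n := by
      by_contra hcon
      have h1 : v j = j := hv j (Or.inr (by omega))
      have h2 := (supp_mem hv hi1 hin).2
      omega
    set v' := v * Equiv.swap i j with hv'def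
    have hsv' : Supp n v' := supp_mul hv (supp_swap hi1 hin (by omega) hjn)
    have hnv' : nInv v' < nInv v := swap_lt hij hj2 (invSet_finite hv)
    have hcrit' : ∀ P Q : ℤ, rA P Q u ≤ rA P Q v' := by
      intro P Q
      have hmaster := rA_mul_swap (P := P) (Q := Q) v hij hi1
      rw [← hv'def] at hmaster
      have hneg2 : ¬ (i ≤ P ∧ P < j ∧ v i ≤ Q ∧ Q < v j) := by
        rintro ⟨_, _, h1, h2⟩; omega
      rw [if_neg hneg2] at hmaster
      by_cases hbox : i ≤ P ∧ P < j ∧ v j ≤ Q ∧ Q < v i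
      · rw [if_pos hbox] at hmaster
        obtain ⟨hPi, hPj, hQ1, hQ2⟩ := hbox
        -- show rA P Q u ≤ rA P Q v - 1
        have huiQ : u i ≤ Q := le_trans hj1 hQ1
        have hdich : ∀ a, i + 1 ≤ a → a ≤ P → v a < u i ∨ v i ≤ v a := by
          intro a h1 h2
          by_contra hcon
          push_neg at hcon
          have := hjleast a ⟨by omega, by omega, by omega⟩
          omega
        have hsplitu : rA P Q u = cnt 1 (i-1) Q u + cnt i i Q u + cnt (i+1) P Q u := by
          rw [rA_eq_cnt, cnt_split 1 (i-1) P Q u (by omega) (by omega),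
            show i - 1 + 1 = i by omega, cnt_split i i P Q u (by omega) (by omega)]
          ring
        have hsplitv : rA P Q v = cnt 1 (i-1) Q v + cnt i i Q v + cnt (i+1) P Q v := by
          rw [rA_eq_cnt, cnt_split 1 (i-1) P Q v (by omega) (by omega),
            show i - 1 + 1 = i by omega, cnt_split i i P Q v (by omega) (by omega)]
          ring
        have hsplitu' : rA P (u i - 1) u =
            cnt 1 (i-1) (u i - 1) u + cnt i i (u i - 1) u + cnt (i+1) P (u i - 1) u := by
          rw [rA_eq_cnt, cnt_split 1 (i-1) P (u i - 1) u (by omega) (by omega),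
            show i - 1 + 1 = i by omega, cnt_split i i P (u i - 1) u (by omega) (by omega)]
          ring
        have hsplitv' : rA P (u i - 1) v =
            cnt 1 (i-1) (u i - 1) v + cnt i i (u i - 1) v + cnt (i+1) P (u i - 1) v := by
          rw [rA_eq_cnt, cnt_split 1 (i-1) P (u i - 1) v (by omega) (by omega),
            show i - 1 + 1 = i by omega, cnt_split i i P (u i - 1) v (by omega) (by omega)]
          ring
        have e1 : cnt 1 (i-1) Q u = cnt 1 (i-1) Q v :=
          cnt_congr _ _ _ _ _ _ (fun a h1 h2 => by rw [hprefix a h1 h2])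
        have e8 : cnt 1 (i-1) (u i - 1) u = cnt 1 (i-1) (u i - 1) v :=
          cnt_congr _ _ _ _ _ _ (fun a h1 h2 => by rw [hprefix a h1 h2])
        have e2 : cnt i i Q u = 0 := by rw [cnt_single, if_neg (by omega)]
        have e3 : cnt i i Q v = 1 := by rw [cnt_single, if_pos (by omega)]
        have e6 : cnt i i (u i - 1) u = 1 := by rw [cnt_single, if_pos (by omega)]
        have e7 : cnt i i (u i - 1) v = 1 := by rw [cnt_single, if_pos (by omega)]
        have e4 : cnt (i+1) P Q v = cnt (i+1) P (u i - 1) v := by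
          apply cnt_congr
          intro a h1 h2
          constructor
          · intro h3; omega
          · intro h3
            rcases hdich a h1 h2 with h4 | h4 <;> omega
        have e5 : cnt (i+1) P Q u ≤ cnt (i+1) P (u i - 1) u :=
          cnt_mono _ _ _ _ _ _ (fun a h1 h2 h3 => by omega)
        have hc2 := hcrit P (u i - 1)
        omega
      · rw [if_neg hbox] at hmaster
        have := hcrit P Q
        omega
    have hchain := IH (nInv v') (by omega) v' hsv' rfl hcrit'
    refine Relation.ReflTransGen.tail hchain ?_
    obtain ⟨g, hgmem, s, hsA, hgseq⟩ :=
      swap_reflection (n := n) (j - i).toNat i j rfl hi1 hij hjn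
    constructor
    · refine ⟨g, hgmem, s, hsA, ?_⟩
      rw [← hgseq, hv'def, mul_assoc, Equiv.swap_mul_self, mul_one]
    · rw [wlen_eq_nInv hsv', wlen_eq_nInv hv]
      exact hnv'

end S13

set_option maxHeartbeats 4000000 in
theorem stmt13 (n k p q k' p' q' : ℤ)
    (hk : 0 < k) (hp : 0 < p) (hq : 0 < q) (hkp : k ≤ p) (hkq : p - q < k)
    (hk' : 0 < k') (hp' : 0 < p') (hq' : 0 < q') (hkp' : k' ≤ p') (hkq' : p' - q' < k')
    (hn : q + k ≤ n) (hn' : q' + k' ≤ n)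
    (v0 v1 : Equiv.Perm ℤ)
    (hv0 : ∀ i : ℤ, v0 i = vAfun k p q i) (hv1 : ∀ i : ℤ, v1 i = vAfun k' p' q' i) :
    bruhatLe (AGens 1 n) v0 v1 ↔ k ≤ rA p q v1 := by
  have hsupp0 : S13.Supp n v0 := by
    intro m hm
    rcases hm with hm | hm <;> (rw [hv0]; unfold vAfun; split_ifs <;> omega)
  have hsupp1 : S13.Supp n v1 := by
    intro m hm
    rcases hm with hm | hm <;> (rw [hv1]; unfold vAfun; split_ifs <;> omega)
  have hid0 := S13.rA_vA hk hp hq hkp hkq v0 hv0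
  have hval0 : rA p q v0 = k := by
    have := hid0 p q
    omega
  constructor
  · intro h
    exact (S13.bruhat_forward h hsupp0 (by omega)).2
  · intro hK
    apply S13.bruhat_chain v0 hsupp0 (S13.nInv v1) v1 hsupp1 rfl
    intro P Q
    have h1 := S13.rA_ge (P := P) (Q := Q) hsupp1
    have h2 : (0:ℤ) ≤ rA P Q v1 := by
      rw [S13.rA_eq_cnt]; exact S13.cnt_nonneg _ _ _ _
    have h3 := S13.rA_box_bound (P := P) (Q := Q) hK
    have h4 := hid0 P Q
    omega
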